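/- Let γ ∈ C^∞(ℝ/ℤ, ℝ^n) be parametrized by arc-length (|γ'(x)| = 1 for all x). Then for every 0 < ε ≤ 1/2 and x, the tangential component of the truncated operator satisfies ⟨Q^εγ(x), γ'(x)⟩ = 4 ∫_{ε≤|w|≤1/2} ∫₀¹∫₀¹ (1−t)(−t) ⟨γ''(x+tw), γ''(x+stw)⟩ / w ds dt dw, where Q^εγ(x) := 2∫_{ε≤|w|≤1/2} (2(γ(x+w)−γ(x)−wγ'(x))/w² − γ''(x)) dw/w². -/

import Mathlib

open intervalIntegral

variable {n : ℕ}

-- second derivative facts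
lemma myhd2 (γ : ℝ → EuclideanSpace ℝ (Fin n)) (hγ : ContDiff ℝ (⊤:ℕ∞) γ) (y : ℝ) :
    HasDerivAt (deriv γ) (iteratedDeriv 2 γ y) y := by
  have h2 : ContDiff ℝ (⊤:ℕ∞) (deriv γ) := (contDiff_infty_iff_deriv.mp hγ).2
  have : iteratedDeriv 2 γ = deriv (deriv γ) := by
    rw [iteratedDeriv_succ, iteratedDeriv_one]
  rw [this]
  exact (h2.differentiable (by simp) y).hasDerivAt

lemma myhc2 (γ : ℝ → EuclideanSpace ℝ (Fin n)) (hγ : ContDiff ℝ (⊤:ℕ∞) γ) :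
    Continuous (iteratedDeriv 2 γ) := by
  have h2 : ContDiff ℝ (⊤:ℕ∞) (deriv γ) := (contDiff_infty_iff_deriv.mp hγ).2
  have : iteratedDeriv 2 γ = deriv (deriv γ) := by
    rw [iteratedDeriv_succ, iteratedDeriv_one]
  rw [this]
  exact (contDiff_infty_iff_deriv.mp h2).2.continuous

lemma myorth (γ : ℝ → EuclideanSpace ℝ (Fin n)) (hγ : ContDiff ℝ (⊤:ℕ∞) γ)
    (harc : ∀ x : ℝ, ‖deriv γ x‖ = 1) (y : ℝ) :
    (inner ℝ (iteratedDeriv 2 γ y) (deriv γ y) : ℝ) = 0 := by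
  have h := (myhd2 γ hγ y).inner ℝ (myhd2 γ hγ y)
  have hconst : (fun t => (inner ℝ (deriv γ t) (deriv γ t) : ℝ)) = fun _ => (1:ℝ) := by
    funext t
    rw [real_inner_self_eq_norm_sq, harc t]; norm_num
  rw [hconst] at h
  have h0 := (hasDerivAt_const y (1:ℝ)).unique h
  have hc : (inner ℝ (deriv γ y) (iteratedDeriv 2 γ y) : ℝ)
      = inner ℝ (iteratedDeriv 2 γ y) (deriv γ y) := real_inner_comm _ _
  linarith [h0, hc]

lemma mykey (γ : ℝ → EuclideanSpace ℝ (Fin n)) (hγ : ContDiff ℝ (⊤:ℕ∞) γ)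
    (harc : ∀ x : ℝ, ‖deriv γ x‖ = 1) (x : ℝ) {w : ℝ} (hw : w ≠ 0) :
    (inner ℝ ((w^2)⁻¹ • ((2/w^2) • (γ (x+w) - γ x - w • deriv γ x) - iteratedDeriv 2 γ x))
        (deriv γ x) : ℝ)
      = 2 * ∫ t in (0:ℝ)..1, ∫ s in (0:ℝ)..1,
          (1 - t) * (-t) *
            (inner ℝ (iteratedDeriv 2 γ (x + t*w)) (iteratedDeriv 2 γ (x + s*t*w)) : ℝ) / w := by
  have horth := myorth γ hγ harc
  have hd1 : ∀ y, HasDerivAt γ (deriv γ y) y :=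
    fun y => (hγ.differentiable (by simp) y).hasDerivAt
  have hd2 := myhd2 γ hγ
  have hc2 := myhc2 γ hγ
  have hline : ∀ (c t : ℝ), HasDerivAt (fun u : ℝ => x + u*c) c t := fun c t => by
    simpa using ((hasDerivAt_id t).mul_const c).const_add x
  -- Step A : Taylor with integral remainder, tested against deriv γ x
  have hA : (inner ℝ (γ (x+w) - γ x - w • deriv γ x) (deriv γ x) : ℝ)
      = ∫ t in (0:ℝ)..1,
          (1-t)*(w^2*(inner ℝ (iteratedDeriv 2 γ (x+t*w)) (deriv γ x) : ℝ)) := by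
    have hF : ∀ t ∈ Set.uIcc (0:ℝ) 1, HasDerivAt
        (fun u => (1-u)*(w*(inner ℝ (deriv γ (x+u*w)) (deriv γ x) : ℝ))
          + (inner ℝ (γ (x+u*w)) (deriv γ x) : ℝ))
        ((1-t)*(w^2*(inner ℝ (iteratedDeriv 2 γ (x+t*w)) (deriv γ x) : ℝ))) t := by
      intro t _
      have h1 : HasDerivAt (fun u : ℝ => (inner ℝ (deriv γ (x+u*w)) (deriv γ x) : ℝ))
          (w*(inner ℝ (iteratedDeriv 2 γ (x+t*w)) (deriv γ x) : ℝ)) t := by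
        have := ((hd2 (x+t*w)).scomp t (hline w t)).inner ℝ (hasDerivAt_const t (deriv γ x))
        simpa only [Function.comp, inner_zero_right, zero_add, real_inner_smul_left]
          using this
      have h1' := h1.const_mul w
      have h2 : HasDerivAt (fun u : ℝ => (inner ℝ (γ (x+u*w)) (deriv γ x) : ℝ))
          (w*(inner ℝ (deriv γ (x+t*w)) (deriv γ x) : ℝ)) t := by
        have := ((hd1 (x+t*w)).scomp t (hline w t)).inner ℝ (hasDerivAt_const t (deriv γ x))
        simpa only [Function.comp, inner_zero_right, zero_add, real_inner_smul_left]
          using this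
      have h3 : HasDerivAt (fun u : ℝ => (1-u)) (-1:ℝ) t := by
        simpa using (hasDerivAt_id t).const_sub 1
      have := (h3.mul h1').add h2
      refine this.congr_deriv ?_
      ring
    have hcont : IntervalIntegrable
        (fun t => (1-t)*(w^2*(inner ℝ (iteratedDeriv 2 γ (x+t*w)) (deriv γ x) : ℝ)))
        MeasureTheory.volume 0 1 := by
      apply Continuous.intervalIntegrable
      have hcc : Continuous (fun t : ℝ => iteratedDeriv 2 γ (x+t*w)) := hc2.comp (continuous_const.add (continuous_id.mul continuous_const))
      exact (continuous_const.sub continuous_id).mul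
        (continuous_const.mul (hcc.inner continuous_const))
    rw [intervalIntegral.integral_eq_sub_of_hasDerivAt hF hcont]
    simp only [inner_sub_left, real_inner_smul_left, one_mul, zero_mul, add_zero, sub_zero,
      sub_self, zero_add]
    ring
  -- Step B : orthogonality transported
  have hB : ∀ t : ℝ, (inner ℝ (iteratedDeriv 2 γ (x+t*w)) (deriv γ x) : ℝ)
      = ∫ s in (0:ℝ)..1,
          -((t*w)*(inner ℝ (iteratedDeriv 2 γ (x+t*w)) (iteratedDeriv 2 γ (x+s*t*w)) : ℝ)) := by
    intro t
    have hline2 : ∀ s : ℝ, HasDerivAt (fun u : ℝ => x + u*t*w) (t*w) s := fun s => by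
      simpa [mul_assoc] using hline (t*w) s
    have hG : ∀ s ∈ Set.uIcc (0:ℝ) 1, HasDerivAt
        (fun u => -(inner ℝ (iteratedDeriv 2 γ (x+t*w)) (deriv γ (x+u*t*w)) : ℝ))
        (-((t*w)*(inner ℝ (iteratedDeriv 2 γ (x+t*w)) (iteratedDeriv 2 γ (x+s*t*w)) : ℝ))) s := by
      intro s _
      have := ((hasDerivAt_const s (iteratedDeriv 2 γ (x+t*w))).inner ℝ
        ((hd2 (x+s*t*w)).scomp s (hline2 s))).neg
      simpa only [Function.comp, inner_zero_left, add_zero, real_inner_smul_right, Pi.neg_def]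
        using this
    have hcont : IntervalIntegrable
        (fun s => -((t*w)*(inner ℝ (iteratedDeriv 2 γ (x+t*w)) (iteratedDeriv 2 γ (x+s*t*w)) : ℝ)))
        MeasureTheory.volume 0 1 := by
      apply Continuous.intervalIntegrable
      have hcc : Continuous (fun s : ℝ => iteratedDeriv 2 γ (x+s*t*w)) := hc2.comp
        (continuous_const.add ((continuous_id.mul continuous_const).mul continuous_const))
      exact (continuous_const.mul (continuous_const.inner hcc)).neg
    rw [intervalIntegral.integral_eq_sub_of_hasDerivAt hG hcont]
    have h1 : (inner ℝ (iteratedDeriv 2 γ (x+t*w)) (deriv γ (x+t*w)) : ℝ) = 0 := horth _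
    simp only [one_mul, zero_mul, add_zero, h1, neg_zero, zero_sub, neg_neg]
  -- combine
  have e1 : ∀ t : ℝ,
      (∫ s in (0:ℝ)..1,
        -((t*w)*(inner ℝ (iteratedDeriv 2 γ (x+t*w)) (iteratedDeriv 2 γ (x+s*t*w)) : ℝ)))
      = (-(t*w)) * ∫ s in (0:ℝ)..1,
          (inner ℝ (iteratedDeriv 2 γ (x+t*w)) (iteratedDeriv 2 γ (x+s*t*w)) : ℝ) := by
    intro t
    rw [← intervalIntegral.integral_const_mul]
    apply intervalIntegral.integral_congr
    intro s _
    ring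
  have e2 : ∀ t : ℝ,
      (∫ s in (0:ℝ)..1,
        (1 - t) * (-t) *
          (inner ℝ (iteratedDeriv 2 γ (x + t*w)) (iteratedDeriv 2 γ (x + s*t*w)) : ℝ) / w)
      = ((1-t)*(-t)/w) * ∫ s in (0:ℝ)..1,
          (inner ℝ (iteratedDeriv 2 γ (x+t*w)) (iteratedDeriv 2 γ (x+s*t*w)) : ℝ) := by
    intro t
    rw [← intervalIntegral.integral_const_mul]
    apply intervalIntegral.integral_congr
    intro s _
    ring
  calc (inner ℝ ((w^2)⁻¹ • ((2/w^2) • (γ (x+w) - γ x - w • deriv γ x) - iteratedDeriv 2 γ x))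
        (deriv γ x) : ℝ)
      = (w^2)⁻¹ * ((2/w^2) * (inner ℝ (γ (x+w) - γ x - w • deriv γ x) (deriv γ x) : ℝ)) := by
        rw [real_inner_smul_left, inner_sub_left, real_inner_smul_left, horth x]
        ring
    _ = (w^2)⁻¹ * ((2/w^2) * ∫ t in (0:ℝ)..1,
          (1-t)*(w^2*(inner ℝ (iteratedDeriv 2 γ (x+t*w)) (deriv γ x) : ℝ))) := by rw [hA]
    _ = ∫ t in (0:ℝ)..1, (w^2)⁻¹ * ((2/w^2) *
          ((1-t)*(w^2*(inner ℝ (iteratedDeriv 2 γ (x+t*w)) (deriv γ x) : ℝ)))) := by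
        rw [intervalIntegral.integral_const_mul, intervalIntegral.integral_const_mul]
    _ = ∫ t in (0:ℝ)..1, 2 * ∫ s in (0:ℝ)..1,
          (1 - t) * (-t) *
            (inner ℝ (iteratedDeriv 2 γ (x + t*w)) (iteratedDeriv 2 γ (x + s*t*w)) : ℝ) / w := by
        apply intervalIntegral.integral_congr
        intro t _
        dsimp only
        rw [hB t, e1 t, e2 t]
        field_simp
    _ = 2 * ∫ t in (0:ℝ)..1, ∫ s in (0:ℝ)..1,
          (1 - t) * (-t) *
            (inner ℝ (iteratedDeriv 2 γ (x + t*w)) (iteratedDeriv 2 γ (x + s*t*w)) : ℝ) / w := by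
        rw [intervalIntegral.integral_const_mul]


/-- The truncated operator `Q^ε` applied to `γ` at `x`. -/
noncomputable def Qtrunc {n : ℕ} (γ : ℝ → EuclideanSpace ℝ (Fin n)) (ε : ℝ) (x : ℝ) :
    EuclideanSpace ℝ (Fin n) :=
  (2:ℝ) • ((∫ w in ε..(1/2:ℝ), (w^2)⁻¹ •
        ((2/w^2) • (γ (x+w) - γ x - w • deriv γ x) - iteratedDeriv 2 γ x)) +
      ∫ w in (-(1/2):ℝ)..(-ε), (w^2)⁻¹ •
        ((2/w^2) • (γ (x+w) - γ x - w • deriv γ x) - iteratedDeriv 2 γ x))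

/-- Tangential part of the truncated operator `Q^ε` for an arc-length parametrized smooth
periodic curve:
`⟨Q^εγ(x), γ'(x)⟩ = 4∫_{ε≤|w|≤1/2}∫₀¹∫₀¹ (1−t)(−t)⟨γ''(x+tw), γ''(x+stw)⟩/w ds dt dw`. -/
theorem stmt14 {n : ℕ} (γ : ℝ → EuclideanSpace ℝ (Fin n))
    (hγ : ContDiff ℝ (⊤ : ℕ∞) γ) (hper : Function.Periodic γ 1)
    (harc : ∀ x : ℝ, ‖deriv γ x‖ = 1)
    (ε : ℝ) (hε : 0 < ε) (hε' : ε ≤ 1/2) (x : ℝ) :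
    (inner ℝ (Qtrunc γ ε x) (deriv γ x) : ℝ) =
      4 * ((∫ w in ε..(1/2:ℝ), ∫ t in (0:ℝ)..1, ∫ s in (0:ℝ)..1,
          (1 - t) * (-t) *
            (inner ℝ (iteratedDeriv 2 γ (x + t*w)) (iteratedDeriv 2 γ (x + s*t*w)) : ℝ) / w) +
        ∫ w in (-(1/2):ℝ)..(-ε), ∫ t in (0:ℝ)..1, ∫ s in (0:ℝ)..1,
          (1 - t) * (-t) *
            (inner ℝ (iteratedDeriv 2 γ (x + t*w)) (iteratedDeriv 2 γ (x + s*t*w)) : ℝ) / w) := by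
  set f : ℝ → EuclideanSpace ℝ (Fin n) := fun w =>
    (w^2)⁻¹ • ((2/w^2) • (γ (x+w) - γ x - w • deriv γ x) - iteratedDeriv 2 γ x) with hf
  have hcf : ∀ a b : ℝ, (0:ℝ) ∉ Set.uIcc a b →
      IntervalIntegrable f MeasureTheory.volume a b := by
    intro a b h0
    have hne : ∀ w ∈ Set.uIcc a b, w ≠ 0 := fun w hw e => h0 (e ▸ hw)
    apply ContinuousOn.intervalIntegrable
    rw [hf]
    apply ContinuousOn.fun_smul
    · exact ((continuous_pow 2).continuousOn).inv₀ (fun w hw => pow_ne_zero 2 (hne w hw))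
    · apply ContinuousOn.sub
      · apply ContinuousOn.fun_smul
        · exact continuousOn_const.div ((continuous_pow 2).continuousOn)
            (fun w hw => pow_ne_zero 2 (hne w hw))
        · apply ContinuousOn.sub
          · apply ContinuousOn.sub
            · exact (hγ.continuous.comp (continuous_const.add continuous_id)).continuousOn
            · exact continuousOn_const
          · exact (continuous_id.smul continuous_const).continuousOn
      · exact continuousOn_const
  have h0pos : (0:ℝ) ∉ Set.uIcc ε (1/2) := by
    rw [Set.uIcc_of_le hε']
    intro h
    exact absurd h.1 (by linarith)
  have h0neg : (0:ℝ) ∉ Set.uIcc (-(1/2):ℝ) (-ε) := by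
    rw [Set.uIcc_of_le (by linarith)]
    intro h
    exact absurd h.2 (by linarith)
  have hkey : ∀ a b : ℝ, (0:ℝ) ∉ Set.uIcc a b →
      (inner ℝ (∫ w in a..b, f w) (deriv γ x) : ℝ)
        = 2 * ∫ w in a..b, ∫ t in (0:ℝ)..1, ∫ s in (0:ℝ)..1,
            (1 - t) * (-t) *
              (inner ℝ (iteratedDeriv 2 γ (x + t*w)) (iteratedDeriv 2 γ (x + s*t*w)) : ℝ) / w := by
    intro a b h0
    have hne : ∀ w ∈ Set.uIcc a b, w ≠ 0 := fun w hw e => h0 (e ▸ hw)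
    have h : (inner ℝ (deriv γ x) (∫ w in a..b, f w) : ℝ)
        = ∫ w in a..b, (inner ℝ (deriv γ x) (f w) : ℝ) :=
      ((innerSL ℝ (deriv γ x)).intervalIntegral_comp_comm (hcf a b h0)).symm
    rw [real_inner_comm, h, ← intervalIntegral.integral_const_mul]
    apply intervalIntegral.integral_congr
    intro w hw
    dsimp only
    rw [real_inner_comm]
    exact mykey γ hγ harc x (hne w hw)
  rw [show Qtrunc γ ε x = (2:ℝ) • ((∫ w in ε..(1/2:ℝ), f w) + ∫ w in (-(1/2):ℝ)..(-ε), f w)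
    from rfl]
  rw [real_inner_smul_left, inner_add_left, hkey ε (1/2) h0pos, hkey _ _ h0neg]
  ring
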